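/- Let (F_ε) and (G_ε) be variationally equivalent families of functionals on a metric space X, and suppose (F_ε) Γ-converges as ε → 0 to a functional H : X → ℝ ∪ {∞}. Then (G_ε) also Γ-converges to H. -/

import Mathlib

open Filter

noncomputable section

variable {X : Type*} [MetricSpace X]

/-- A sequence in a metric space is unbounded. -/
def SeqUnbounded {X : Type*} [MetricSpace X] (p : ℕ → X) : Prop :=
  ¬ Bornology.IsBounded (Set.range p)

/-- `PrecWith d G F`: the order relation `(G_ε) ⪯ (F_ε)` realized by the specific
reparametrization `δ` (continuous and increasing on `[0,∞)` with `δ 0 = 0`):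
for every sequence `εₙ → 0⁺` and every `(pₙ)` with `F_{εₙ}(pₙ) ≤ C`, there is `(qₙ)` with
`limsupₙ (G_{δ(εₙ)}(qₙ) − F_{εₙ}(pₙ)) ≤ 0` and either both sequences are unbounded or
`d(pₙ, qₙ) → 0`. Functionals take values in `ℝ ∪ {±∞}` (only `+∞` is relevant). -/
def PrecWith {X : Type*} [MetricSpace X] (δ : ℝ → ℝ) (G F : ℝ → X → EReal) : Prop :=
  ContinuousOn δ (Set.Ici 0) ∧ StrictMonoOn δ (Set.Ici 0) ∧ δ 0 = 0 ∧
    ∀ ε : ℕ → ℝ, (∀ n, 0 < ε n) → Tendsto ε atTop (nhds 0) →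
      ∀ p : ℕ → X, ∀ C : ℝ, (∀ n, F (ε n) (p n) ≤ (C : EReal)) →
        ∃ q : ℕ → X,
          limsup (fun n => G (δ (ε n)) (q n) - F (ε n) (p n)) atTop ≤ (0 : EReal) ∧
            ((SeqUnbounded p ∧ SeqUnbounded q) ∨
              Tendsto (fun n => dist (p n) (q n)) atTop (nhds 0))

/-- The order relation `(G_ε) ⪯ (F_ε)` between families of functionals. -/
def Prec {X : Type*} [MetricSpace X] (G F : ℝ → X → EReal) : Prop :=
  ∃ δ : ℝ → ℝ, PrecWith δ G F

/-- Variational equivalence of two families of functionals: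
`(F_ε) ≃ (G_ε)` iff `(F_ε) ⪯ (G_ε)` and `(G_ε) ⪯ (F_ε)`. -/
def VarEquiv {X : Type*} [MetricSpace X] (F G : ℝ → X → EReal) : Prop :=
  Prec F G ∧ Prec G F

/-- Equi-coercivity of a family of functionals: any sequence with bounded energy along a
vanishing sequence of scales is relatively compact. -/
def EquiCoercive {X : Type*} [MetricSpace X] (F : ℝ → X → EReal) : Prop :=
  ∀ ε : ℕ → ℝ, (∀ n, 0 < ε n) → Tendsto ε atTop (nhds 0) →
    ∀ p : ℕ → X, ∀ C : ℝ, (∀ n, F (ε n) (p n) ≤ (C : EReal)) →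
      IsCompact (closure (Set.range p))

/-- Γ-convergence of the family `(F_ε)` to `H` as `ε → 0`. -/
def GammaConv {X : Type*} [MetricSpace X] (F : ℝ → X → EReal) (H : X → EReal) : Prop :=
  (∀ ε : ℕ → ℝ, (∀ n, 0 < ε n) → Tendsto ε atTop (nhds 0) →
      ∀ p : ℕ → X, ∀ x : X, Tendsto p atTop (nhds x) →
        H x ≤ liminf (fun n => F (ε n) (p n)) atTop) ∧
    (∀ ε : ℕ → ℝ, (∀ n, 0 < ε n) → Tendsto ε atTop (nhds 0) →
      ∀ x : X, ∃ p : ℕ → X, Tendsto p atTop (nhds x) ∧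
        limsup (fun n => F (ε n) (p n)) atTop ≤ H x)


lemma ereal_le_add_of_sub_le {x y : EReal} {a : ℝ} (hy : y ≠ ⊤) (h : x - y ≤ (a : EReal)) :
    x ≤ (a : EReal) + y :=
  (EReal.sub_le_iff_le_add (Or.inr (EReal.coe_ne_top a)) (Or.inl hy)).1 h

lemma key_limsup (f g : ℕ → EReal) (H : EReal) (hf : limsup f atTop ≤ H)
    (hfg : limsup (fun n => g n - f n) atTop ≤ (0 : EReal)) : limsup g atTop ≤ H := by
  refine le_of_forall_gt_imp_ge_of_dense fun c hc => ?_
  obtain ⟨C, hC1, hC2⟩ := EReal.exists_between_coe_real hc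
  obtain ⟨C', hC'1, hC'2⟩ := EReal.exists_between_coe_real hC2
  have hCC' : C < C' := by exact_mod_cast hC'1
  have hev1 : ∀ᶠ n in atTop, f n < (C : EReal) :=
    eventually_lt_of_limsup_lt (lt_of_le_of_lt hf hC1)
  have hev2 : ∀ᶠ n in atTop, g n - f n < ((C' - C : ℝ) : EReal) :=
    eventually_lt_of_limsup_lt (lt_of_le_of_lt hfg (by exact_mod_cast sub_pos.2 hCC'))
  have hev : ∀ᶠ n in atTop, g n ≤ (C' : EReal) := by
    filter_upwards [hev1, hev2] with n h1 h2
    have := ereal_le_add_of_sub_le (ne_top_of_lt h1) h2.le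
    calc g n ≤ ((C' - C : ℝ) : EReal) + f n := this
      _ ≤ ((C' - C : ℝ) : EReal) + (C : EReal) := add_le_add_right h1.le _
      _ = (C' : EReal) := by rw [← EReal.coe_add]; norm_num
  exact (limsup_le_of_le (by isBoundedDefault) hev).trans hC'2.le

lemma tendsto_of_dist_aux {X : Type*} [MetricSpace X] (p q : ℕ → X) (x : X)
    (hp : Tendsto p atTop (nhds x))
    (hd : Tendsto (fun n => dist (p n) (q n)) atTop (nhds 0)) :
    Tendsto q atTop (nhds x) := by
  rw [tendsto_iff_dist_tendsto_zero] at hp ⊢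
  refine squeeze_zero (g := fun n => dist (p n) (q n) + dist (p n) x)
    (fun n => dist_nonneg) (fun n => ?_) (by simpa using hd.add hp)
  calc dist (q n) x ≤ dist (q n) (p n) + dist (p n) x := dist_triangle _ _ _
    _ = dist (p n) (q n) + dist (p n) x := by rw [dist_comm]

/-- Variationally equivalent families share the same Γ-limit. -/
theorem gammaConv_of_varEquiv {X : Type*} [MetricSpace X]
    (F G : ℝ → X → EReal) (H : X → EReal)
    (hequiv : VarEquiv F G) (hgamma : GammaConv F H) :
    GammaConv G H := by
  obtain ⟨⟨δ, hδc, hδm, hδ0, hδ⟩, ⟨δ', hδ'c, hδ'm, hδ'0, hδ'⟩⟩ := hequiv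
  constructor
  · -- liminf inequality for G
    intro ε hpos htend p x hp
    refine le_of_forall_gt_imp_ge_of_dense fun c hc => ?_
    obtain ⟨C, hC1, hC2⟩ := EReal.exists_between_coe_real hc
    have hfreq : ∃ᶠ n in atTop, G (ε n) (p n) < (C : EReal) :=
      frequently_lt_of_liminf_lt (by isBoundedDefault) hC1
    obtain ⟨φ, hφ, hφP⟩ := extraction_of_frequently_atTop hfreq
    have hε' : ∀ n, 0 < ε (φ n) := fun n => hpos _
    have htend' : Tendsto (fun n => ε (φ n)) atTop (nhds 0) := htend.comp hφ.tendsto_atTop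
    have hp' : Tendsto (fun n => p (φ n)) atTop (nhds x) := hp.comp hφ.tendsto_atTop
    obtain ⟨q, hq1, hq2⟩ :=
      hδ (fun n => ε (φ n)) hε' htend' (fun n => p (φ n)) C (fun n => (hφP n).le)
    have hdist : Tendsto (fun n => dist (p (φ n)) (q n)) atTop (nhds 0) := by
      rcases hq2 with ⟨hu, _⟩ | h
      · exact absurd (hp'.cauchySeq.isBounded_range) hu
      · exact h
    have hqx : Tendsto q atTop (nhds x) := tendsto_of_dist_aux _ _ _ hp' hdist
    have hδpos : ∀ n, 0 < δ (ε (φ n)) := fun n => by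
      have := hδm (Set.mem_Ici.2 le_rfl) (Set.mem_Ici.2 (hε' n).le) (hε' n)
      rwa [hδ0] at this
    have hδtend : Tendsto (fun n => δ (ε (φ n))) atTop (nhds 0) := by
      have h0 : ContinuousWithinAt δ (Set.Ici 0) 0 := hδc 0 (Set.mem_Ici.2 le_rfl)
      have h1 : Tendsto (fun n => ε (φ n)) atTop (nhdsWithin 0 (Set.Ici 0)) :=
        tendsto_nhdsWithin_iff.2 ⟨htend', Eventually.of_forall fun n => Set.mem_Ici.2 (hε' n).le⟩
      have := h0.tendsto.comp h1
      rwa [hδ0] at this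
    have hHx := hgamma.1 (fun n => δ (ε (φ n))) hδpos hδtend q x hqx
    have hGls : limsup (fun n => G (ε (φ n)) (p (φ n))) atTop ≤ (C : EReal) :=
      limsup_le_of_le (by isBoundedDefault) (Eventually.of_forall fun n => (hφP n).le)
    have hkey := key_limsup (fun n => G (ε (φ n)) (p (φ n)))
      (fun n => F (δ (ε (φ n))) (q n)) (C : EReal) hGls hq1
    calc H x ≤ liminf (fun n => F (δ (ε (φ n))) (q n)) atTop := hHx
      _ ≤ limsup (fun n => F (δ (ε (φ n))) (q n)) atTop := liminf_le_limsup
      _ ≤ (C : EReal) := hkey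
      _ ≤ c := hC2.le
  · -- recovery sequences for G
    intro ε hpos htend x
    by_cases hH : H x = ⊤
    · exact ⟨fun _ => x, tendsto_const_nhds, hH ▸ le_top⟩
    have hδ'1 : 0 < δ' 1 := by
      have := hδ'm (Set.mem_Ici.2 le_rfl) (Set.mem_Ici.2 zero_le_one) one_pos
      rwa [hδ'0] at this
    have hex : ∀ t : ℝ, 0 < t → t < δ' 1 → ∃ s, 0 < s ∧ s ≤ 1 ∧ δ' s = t := by
      intro t ht htl
      have hmem : t ∈ Set.Icc (δ' 0) (δ' 1) := ⟨by rw [hδ'0]; exact ht.le, htl.le⟩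
      obtain ⟨s, hs, hst⟩ := intermediate_value_Icc zero_le_one
        (hδ'c.mono (fun y hy => hy.1)) hmem
      refine ⟨s, ?_, hs.2, hst⟩
      rcases eq_or_lt_of_le hs.1 with h | h
      · exfalso; rw [← h, hδ'0] at hst; exact ht.ne hst
      · exact h
    classical
    set η : ℕ → ℝ := fun n =>
      if h : ε n < δ' 1 then (hex (ε n) (hpos n) h).choose else 1 with hηdef
    have hηpos : ∀ n, 0 < η n := by
      intro n; rw [hηdef]; dsimp only
      split
      · exact (hex (ε n) (hpos n) (by assumption)).choose_spec.1
      · exact one_pos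
    have hηle : ∀ n, η n ≤ 1 := by
      intro n; rw [hηdef]; dsimp only
      split
      · exact (hex (ε n) (hpos n) (by assumption)).choose_spec.2.1
      · exact le_rfl
    have hηδ : ∀ n, ε n < δ' 1 → δ' (η n) = ε n := by
      intro n hn; rw [hηdef]; dsimp only
      rw [dif_pos hn]
      exact (hex (ε n) (hpos n) hn).choose_spec.2.2
    have hηtend : Tendsto η atTop (nhds 0) := by
      rw [tendsto_order]
      constructor
      · intro a ha
        exact Eventually.of_forall fun n => ha.trans (hηpos n)
      · intro b hb
        rcases le_or_gt b 1 with hb1 | hb1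
        · have hδ'b : 0 < δ' b := by
            have := hδ'm (Set.mem_Ici.2 le_rfl) (Set.mem_Ici.2 hb.le) hb
            rwa [hδ'0] at this
          have hδ'b1 : δ' b ≤ δ' 1 :=
            hδ'm.monotoneOn (Set.mem_Ici.2 hb.le) (Set.mem_Ici.2 zero_le_one) hb1
          filter_upwards [htend.eventually_lt_const hδ'b] with n hn
          have hn1 : ε n < δ' 1 := hn.trans_le hδ'b1
          have : δ' (η n) < δ' b := by rw [hηδ n hn1]; exact hn
          exact (hδ'm.lt_iff_lt (Set.mem_Ici.2 (hηpos n).le) (Set.mem_Ici.2 hb.le)).1 this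
        · exact Eventually.of_forall fun n => (hηle n).trans_lt hb1
    obtain ⟨p, hp, hlim⟩ := hgamma.2 η hηpos hηtend x
    obtain ⟨C, hC, -⟩ := EReal.exists_between_coe_real (Ne.lt_top hH)
    have hev : ∀ᶠ n in atTop, F (η n) (p n) < (C : EReal) :=
      eventually_lt_of_limsup_lt (lt_of_le_of_lt hlim hC)
    have hev2 : ∀ᶠ n in atTop, ε n < δ' 1 := htend.eventually_lt_const hδ'1
    obtain ⟨N, hN⟩ := eventually_atTop.1 (hev.and hev2)
    have hbd : ∀ n, F (η (n + N)) (p (n + N)) ≤ (C : EReal) :=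
      fun n => (hN (n + N) (Nat.le_add_left N n)).1.le
    have hηstend : Tendsto (fun n => η (n + N)) atTop (nhds 0) :=
      (tendsto_add_atTop_iff_nat N).2 hηtend
    obtain ⟨qs, hqs1, hqs2⟩ := hδ' (fun n => η (n + N)) (fun n => hηpos _) hηstend
      (fun n => p (n + N)) C hbd
    have hps : Tendsto (fun n => p (n + N)) atTop (nhds x) :=
      (tendsto_add_atTop_iff_nat N).2 hp
    have hdist : Tendsto (fun n => dist (p (n + N)) (qs n)) atTop (nhds 0) := by
      rcases hqs2 with ⟨hu, _⟩ | h
      · exact absurd (hps.cauchySeq.isBounded_range) hu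
      · exact h
    have hqsx : Tendsto qs atTop (nhds x) := tendsto_of_dist_aux _ _ _ hps hdist
    refine ⟨fun n => qs (n - N), ?_, ?_⟩
    · refine (tendsto_add_atTop_iff_nat N).1 ?_
      simpa only [Nat.add_sub_cancel] using hqsx
    · have hshift : ∀ n, δ' (η (n + N)) = ε (n + N) :=
        fun n => hηδ (n + N) (hN (n + N) (Nat.le_add_left N n)).2
      rw [← limsup_nat_add (fun n => G (ε n) (qs (n - N))) N]
      have hfun : (fun n => G (ε (n + N)) (qs (n + N - N))) =
          fun n => G (δ' (η (n + N))) (qs n) := by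
        funext n; rw [Nat.add_sub_cancel, hshift n]
      rw [hfun]
      have hlims : limsup (fun n => F (η (n + N)) (p (n + N))) atTop ≤ H x := by
        rw [limsup_nat_add (fun n => F (η n) (p n)) N]; exact hlim
      exact key_limsup (fun n => F (η (n + N)) (p (n + N)))
        (fun n => G (δ' (η (n + N))) (qs n)) (H x) hlims hqs1
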